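/- Let T = (M, E) be a tree, ρ a metric on M, and suppose ρ(T) < ∞. Then T is a minimal spanning tree on (M, ρ) if and only if every edge of T is exact, i.e., for each e ∈ E with induced partition {M₁, M₂} of M, one has ρ(e) = inf{ρ(x, y) : x ∈ M₁, y ∈ M₂}. -/

import Mathlib

open scoped ENNReal

namespace MSTPaper

variable {M : Type*}

/-- The length of an edge `e` of a graph on a metric space: the extended
distance between its endpoints. -/
noncomputable def edgeLen [MetricSpace M] (e : Sym2 M) : ℝ≥0∞ :=
  Sym2.lift ⟨fun x y => edist x y, fun x y => edist_comm x y⟩ e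

/-- The length of a graph: the (possibly infinite) sum of the lengths of its edges. -/
noncomputable def graphLen [MetricSpace M] (G : SimpleGraph M) : ℝ≥0∞ :=
  ∑' e : G.edgeSet, edgeLen (e : Sym2 M)

/-- The distance between two subsets of a metric space. -/
noncomputable def setDist [MetricSpace M] (A B : Set M) : ℝ≥0∞ :=
  ⨅ x ∈ A, ⨅ y ∈ B, edist x y

/-- A minimal spanning tree on the metric space `M`: a spanning tree of finite
length whose length equals the infimum of lengths of all spanning trees on `M`. -/
def IsMST [MetricSpace M] (T : SimpleGraph M) : Prop :=
  T.IsTree ∧ graphLen T < ⊤ ∧ ∀ T' : SimpleGraph M, T'.IsTree → graphLen T ≤ graphLen T'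

/-- An edge `uv` of `G` is exact if its length equals the distance between the
two connected components obtained by removing it. -/
def ExactEdge [MetricSpace M] (G : SimpleGraph M) (u v : M) : Prop :=
  edist u v = setDist {x | (G.deleteEdges {s(u,v)}).Reachable u x}
                      {x | (G.deleteEdges {s(u,v)}).Reachable v x}

open SimpleGraph

lemma edgeLen_mk [MetricSpace M] (x y : M) : edgeLen s(x, y) = edist x y := rfl

lemma graphLen_def [MetricSpace M] (G : SimpleGraph M) :
    graphLen G = ∑' e : G.edgeSet, edgeLen (e : Sym2 M) := rfl

/-- If every edge of `G` joins `H`-reachable vertices, then `G`-reachability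
implies `H`-reachability. -/
lemma reachable_of_adj_reachable {G H : SimpleGraph M}
    (h : ∀ a b : M, G.Adj a b → H.Reachable a b) {a b : M} (hr : G.Reachable a b) :
    H.Reachable a b := by
  obtain ⟨w⟩ := hr
  induction w with
  | nil => exact Reachable.refl _
  | cons ha _ ih => exact (h _ _ ha).trans ih

lemma reach_or_reach_aux {T : SimpleGraph M} {u v : M} (huv : T.Adj u v) :
    ∀ {c z : M}, T.Walk c z →
      ((T.deleteEdges {s(u, v)}).Reachable u c ∨ (T.deleteEdges {s(u, v)}).Reachable v c) →
      (T.deleteEdges {s(u, v)}).Reachable u z ∨ (T.deleteEdges {s(u, v)}).Reachable v z := by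
  intro c z w
  induction w with
  | nil => exact id
  | @cons a b z hab p ih =>
    intro hc
    refine ih ?_
    by_cases he : s(a, b) = s(u, v)
    · rw [Sym2.eq_iff] at he
      rcases he with ⟨rfl, rfl⟩ | ⟨rfl, rfl⟩
      · exact Or.inr (Reachable.refl _)
      · exact Or.inl (Reachable.refl _)
    · have hadj : (T.deleteEdges {s(u, v)}).Adj a b := by
        rw [deleteEdges_adj]
        exact ⟨hab, by simpa using he⟩
      rcases hc with h1 | h1
      · exact Or.inl (h1.trans hadj.reachable)
      · exact Or.inr (h1.trans hadj.reachable)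

/-- In a connected graph, after removing an edge `uv`, every vertex is still
reachable from `u` or from `v`. -/
lemma reach_or_reach {T : SimpleGraph M} (hc : T.Preconnected) {u v : M} (huv : T.Adj u v)
    (z : M) :
    (T.deleteEdges {s(u, v)}).Reachable u z ∨ (T.deleteEdges {s(u, v)}).Reachable v z := by
  obtain ⟨w⟩ := hc u z
  exact reach_or_reach_aux huv w (Or.inl (Reachable.refl _))

/-- Along a path from inside `A` to outside `A` there is an edge crossing the
boundary of `A`, and the pieces before and after it avoid that edge. -/
lemma exists_cross_edge {G : SimpleGraph M} {A : Set M} :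
    ∀ {a c : M} (p : G.Walk a c), p.IsPath → a ∈ A → c ∉ A →
      ∃ x y, G.Adj x y ∧ x ∈ A ∧ y ∉ A ∧
        (G.deleteEdges {s(x, y)}).Reachable a x ∧ (G.deleteEdges {s(x, y)}).Reachable y c ∧
        s(x, y) ∈ p.edges := by
  intro a c p
  induction p with
  | nil => intro _ ha hc; exact absurd ha hc
  | @cons a b c hab q ih =>
    intro hp ha hc
    rw [Walk.cons_isPath_iff] at hp
    by_cases hb : b ∈ A
    · obtain ⟨x, y, hxy, hx, hy, h1, h2, hmem⟩ := ih hp.1 hb hc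
      have hne : s(a, b) ≠ s(x, y) := by
        intro h
        exact hp.2 (q.fst_mem_support_of_mem_edges (h ▸ hmem))
      have hadj : (G.deleteEdges {s(x, y)}).Adj a b := by
        rw [deleteEdges_adj]
        exact ⟨hab, by simpa using hne⟩
      exact ⟨x, y, hxy, hx, hy, hadj.reachable.trans h1, h2, List.mem_cons_of_mem _ hmem⟩
    · refine ⟨a, b, hab, ha, hb, Reachable.refl _, ?_, List.mem_cons_self⟩
      have hq : ∀ e ∈ q.edges, e ∉ ({s(a, b)} : Set (Sym2 M)) := by
        intro e he h
        rw [Set.mem_singleton_iff] at h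
        exact hp.2 (q.fst_mem_support_of_mem_edges (h ▸ he))
      exact ⟨q.toDeleteEdges _ hq⟩

/-- Deleting edges preserves acyclicity. -/
lemma isAcyclic_deleteEdges {T : SimpleGraph M} (hT : T.IsAcyclic) (s : Set (Sym2 M)) :
    (T.deleteEdges s).IsAcyclic := by
  intro w c hc
  have hsub : ∀ e ∈ c.edges, e ∈ T.edgeSet := by
    intro e he
    have := c.edges_subset_edgeSet he
    rw [edgeSet_deleteEdges] at this
    exact this.1
  exact hT (c.transfer T hsub) (hc.transfer hsub)

/-- Adding an edge between two vertices in different components of an acyclic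
graph preserves acyclicity. -/
lemma isAcyclic_sup_edge {G : SimpleGraph M} (hG : G.IsAcyclic) {x y : M}
    (hxy : ¬G.Reachable x y) : (G ⊔ fromEdgeSet {s(x, y)}).IsAcyclic := by
  intro w c hc
  by_cases he : s(x, y) ∈ c.edges
  · have hr := (adj_and_reachable_delete_edges_iff_exists_cycle.mpr ⟨w, c, hc, he⟩).2
    apply hxy
    refine hr.mono ?_
    calc (G ⊔ fromEdgeSet {s(x, y)}) \ fromEdgeSet {s(x, y)}
        = G \ fromEdgeSet {s(x, y)} := sup_sdiff_right_self
      _ ≤ G := sdiff_le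
  · have hsub : ∀ e ∈ c.edges, e ∈ G.edgeSet := by
      intro e hec
      have hmem := c.edges_subset_edgeSet hec
      rw [edgeSet_sup] at hmem
      rcases hmem with h | h
      · exact h
      · rw [edgeSet_fromEdgeSet] at h
        obtain ⟨h1, -⟩ := h
        rw [Set.mem_singleton_iff] at h1
        subst h1
        exact absurd hec he
    exact hG (c.transfer G hsub) (hc.transfer hsub)

/-- Every edge of an acyclic graph is a bridge. -/
lemma tree_not_reach {T : SimpleGraph M} (hA : T.IsAcyclic) {u v : M} (h : T.Adj u v) :
    ¬(T.deleteEdges {s(u, v)}).Reachable u v := by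
  have hb := isAcyclic_iff_forall_adj_isBridge.mp hA h
  rw [isBridge_iff] at hb
  exact hb

/-- Exchange lemma : if `uv` is a new edge whose endpoints can reach (avoiding
the edge `xy`) the respective endpoints of an edge `xy` of a connected graph
`G`, then deleting `xy` and adding `uv` keeps the graph connected. -/
lemma connected_exchange {G : SimpleGraph M} (hG : G.Connected) {x y u v : M}
    (hne : u ≠ v)
    (h1 : (G.deleteEdges {s(x, y)}).Reachable u x)
    (h2 : (G.deleteEdges {s(x, y)}).Reachable y v) :
    (G.deleteEdges {s(x, y)} ⊔ fromEdgeSet {s(u, v)}).Connected := by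
  set H := G.deleteEdges {s(x, y)} ⊔ fromEdgeSet {s(u, v)} with hH
  have hle : G.deleteEdges {s(x, y)} ≤ H := le_sup_left
  have huv : H.Adj u v := by
    have : (fromEdgeSet {s(u, v)}).Adj u v := by
      rw [fromEdgeSet_adj]
      exact ⟨rfl, hne⟩
    exact (le_sup_right : fromEdgeSet {s(u, v)} ≤ H) this
  have hxyr : H.Reachable x y :=
    ((h1.mono hle).symm.trans huv.reachable).trans (h2.mono hle).symm
  have hedge : ∀ a b : M, G.Adj a b → H.Reachable a b := by
    intro a b hab
    by_cases he : s(a, b) = s(x, y)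
    · rw [Sym2.eq_iff] at he
      rcases he with ⟨rfl, rfl⟩ | ⟨rfl, rfl⟩
      · exact hxyr
      · exact hxyr.symm
    · have : (G.deleteEdges {s(x, y)}).Adj a b := by
        rw [deleteEdges_adj]
        exact ⟨hab, by simpa using he⟩
      exact (this.reachable).mono hle
  haveI : Nonempty M := hG.nonempty
  exact ⟨fun a b => reachable_of_adj_reachable hedge (hG.preconnected a b)⟩

/-- Splitting off one edge from the length of a graph. -/
lemma graphLen_split [MetricSpace M] {G : SimpleGraph M} {a : Sym2 M} {s : Set (Sym2 M)}
    (hE : G.edgeSet = insert a s) (ha : a ∉ s) :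
    graphLen G = edgeLen a + ∑' e : s, edgeLen (e : Sym2 M) := by
  rw [graphLen_def, hE, Set.insert_eq]
  rw [ENNReal.summable.tsum_union_disjoint (f := fun e : Sym2 M => edgeLen e)
      (Set.disjoint_singleton_left.mpr ha) ENNReal.summable,
    tsum_singleton]

/-- The key combinatorial lemma: given an acyclic graph `T` and a connected
graph `G` on the same vertex set, any finite set `S` of edges of `T` admits an
injection `φ` into the edges of `G` such that `φ f` crosses the cut of `T`
determined by `f`. -/
lemma key (T : SimpleGraph M) (hA : T.IsAcyclic) :
    ∀ (n : ℕ) (S : Finset (Sym2 M)), S.card = n → (∀ f ∈ S, f ∈ T.edgeSet) →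
      ∀ G : SimpleGraph M, G.Connected →
        ∃ φ : Sym2 M → Sym2 M, Set.InjOn φ ↑S ∧
          ∀ f ∈ S, φ f ∈ G.edgeSet ∧
            ∀ x y : M, φ f = s(x, y) → ¬(T.deleteEdges {f}).Reachable x y := by
  intro n
  induction n with
  | zero =>
    intro S hcard _ G _
    rw [Finset.card_eq_zero] at hcard
    subst hcard
    exact ⟨id, by simp, by simp⟩
  | succ n ih =>
    intro S hcard hS G hG
    classical
    have hSne : S.Nonempty := Finset.card_pos.mp (by omega)
    obtain ⟨e, he⟩ := hSne
    obtain ⟨u, v, rfl⟩ : ∃ u v, e = s(u, v) := Sym2.ind (fun u v => ⟨u, v, rfl⟩) e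
    have hadj : T.Adj u v := hS _ he
    have huvne : u ≠ v := hadj.ne
    have hbr : ¬(T.deleteEdges {s(u, v)}).Reachable u v := tree_not_reach hA hadj
    obtain ⟨w⟩ := hG.preconnected u v
    obtain ⟨p, hp⟩ := w.toPath
    obtain ⟨x, y, hxy, hx, hy, h1, h2, -⟩ :=
      exists_cross_edge (A := {z | (T.deleteEdges {s(u, v)}).Reachable u z}) p hp
        (Reachable.refl _) hbr
    have hcrossT : ¬(T.deleteEdges {s(u, v)}).Reachable x y := fun h => hy (hx.trans h)
    have hH : (G.deleteEdges {s(x, y)} ⊔ fromEdgeSet {s(u, v)}).Connected :=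
      connected_exchange hG huvne h1 h2
    obtain ⟨φ', hinj', hφ'⟩ := ih (S.erase s(u, v))
      (by rw [Finset.card_erase_of_mem he, hcard]; rfl)
      (fun f hf => hS f (Finset.mem_of_mem_erase hf)) _ hH
    have hnotuv : ∀ f ∈ S.erase s(u, v), φ' f ≠ s(u, v) := by
      intro f hf h
      refine (hφ' f hf).2 u v h ?_
      have : (T.deleteEdges {f}).Adj u v := by
        rw [deleteEdges_adj]
        refine ⟨hadj, ?_⟩
        simpa using fun hh => (Finset.ne_of_mem_erase hf) hh.symm
      exact this.reachable
    have hmem' : ∀ f ∈ S.erase s(u, v), φ' f ∈ G.edgeSet ∧ φ' f ≠ s(x, y) := by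
      intro f hf
      have h1' := (hφ' f hf).1
      rw [edgeSet_sup, edgeSet_deleteEdges, edgeSet_fromEdgeSet] at h1'
      rcases h1' with h | h
      · exact ⟨h.1, fun hh => h.2 (by rw [hh]; rfl)⟩
      · exact absurd h.1 (by simpa using hnotuv f hf)
    refine ⟨fun g => if g = s(u, v) then s(x, y) else φ' g, ?_, ?_⟩
    · intro q hq r hr hqr
      dsimp only at hqr
      rw [Finset.mem_coe] at hq hr
      by_cases hqe : q = s(u, v) <;> by_cases hre : r = s(u, v)
      · rw [hqe, hre]
      · rw [if_pos hqe, if_neg hre] at hqr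
        exact absurd hqr.symm (hmem' r (Finset.mem_erase.mpr ⟨hre, hr⟩)).2
      · rw [if_neg hqe, if_pos hre] at hqr
        exact absurd hqr (hmem' q (Finset.mem_erase.mpr ⟨hqe, hq⟩)).2
      · rw [if_neg hqe, if_neg hre] at hqr
        exact hinj' (Finset.mem_coe.mpr (Finset.mem_erase.mpr ⟨hqe, hq⟩))
          (Finset.mem_coe.mpr (Finset.mem_erase.mpr ⟨hre, hr⟩)) hqr
    · intro f hf
      dsimp only
      by_cases hfe : f = s(u, v)
      · subst hfe
        rw [if_pos rfl]
        refine ⟨hxy, ?_⟩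
        intro a b hab
        rw [Sym2.eq_iff] at hab
        rcases hab with ⟨rfl, rfl⟩ | ⟨rfl, rfl⟩
        · exact hcrossT
        · exact fun h => hcrossT h.symm
      · have hf' : f ∈ S.erase s(u, v) := Finset.mem_erase.mpr ⟨hfe, hf⟩
        rw [if_neg hfe]
        exact ⟨(hmem' f hf').1, (hφ' f hf').2⟩

/-- A spanning tree of finite length is a minimal spanning tree iff all its edges
are exact. -/
theorem mst_iff_all_edges_exact [MetricSpace M] (T : SimpleGraph M) (hT : T.IsTree)
    (hfin : graphLen T < ⊤) :
    IsMST T ↔ ∀ a b : M, T.Adj a b → ExactEdge T a b := by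
  constructor
  · rintro ⟨-, -, hmin⟩ a b hab
    have hbr : ¬(T.deleteEdges {s(a, b)}).Reachable a b := tree_not_reach hT.IsAcyclic hab
    have hsep : ∀ x ∈ {z | (T.deleteEdges {s(a, b)}).Reachable a z},
        ∀ y ∈ {z | (T.deleteEdges {s(a, b)}).Reachable b z},
        ¬(T.deleteEdges {s(a, b)}).Reachable x y := by
      intro x hx y hy h
      exact hbr (hx.trans (h.trans hy.symm))
    show edist a b = setDist _ _
    refine le_antisymm ?_ ?_
    · by_contra hlt
      push_neg at hlt
      simp only [setDist, iInf_lt_iff] at hlt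
      obtain ⟨x, hx, y, hy, hxy⟩ := hlt
      have hxyne : x ≠ y := by
        rintro rfl
        exact hsep x hx x hy (Reachable.refl _)
      have hnotmem : s(x, y) ∉ T.edgeSet := by
        intro hmem
        by_cases hcase : s(x, y) = s(a, b)
        · rw [Sym2.eq_iff] at hcase
          rcases hcase with ⟨rfl, rfl⟩ | ⟨rfl, rfl⟩
          · exact lt_irrefl _ hxy
          · exact lt_irrefl _ (lt_of_lt_of_le hxy (edist_comm y x).le)
        · refine hsep x hx y hy (Adj.reachable ?_)
          rw [deleteEdges_adj]
          exact ⟨hmem, by simpa using hcase⟩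
      set T' := T.deleteEdges {s(a, b)} ⊔ fromEdgeSet {s(x, y)} with hT'def
      have hT'tree : T'.IsTree :=
        ⟨connected_exchange hT.isConnected hxyne hx.symm hy,
          isAcyclic_sup_edge (isAcyclic_deleteEdges hT.IsAcyclic _) (hsep x hx y hy)⟩
      have hE' : T'.edgeSet = insert s(x, y) (T.edgeSet \ {s(a, b)}) := by
        rw [hT'def, edgeSet_sup, edgeSet_deleteEdges, edgeSet_fromEdgeSet]
        have hd : ({s(x, y)} : Set (Sym2 M)) \ {e : Sym2 M | e.IsDiag} = {s(x, y)} := by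
          ext f
          simp only [Set.mem_diff, Set.mem_singleton_iff, Set.mem_setOf_eq,
            and_iff_left_iff_imp]
          rintro rfl
          simpa using hxyne
        rw [Sym2.diagSet_eq_setOfPred_isDiag, hd, Set.insert_eq, Set.union_comm]
      have hET : T.edgeSet = insert s(a, b) (T.edgeSet \ {s(a, b)}) := by
        rw [Set.insert_diff_singleton]
        exact (Set.insert_eq_self.mpr (show s(a, b) ∈ T.edgeSet from hab)).symm
      have hsplit1 : graphLen T' =
          edist x y + ∑' e : ↥(T.edgeSet \ {s(a, b)}), edgeLen (e : Sym2 M) :=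
        graphLen_split hE' (fun h => hnotmem h.1)
      have hsplit2 : graphLen T =
          edist a b + ∑' e : ↥(T.edgeSet \ {s(a, b)}), edgeLen (e : Sym2 M) :=
        graphLen_split hET (fun h => h.2 rfl)
      have hLfin : (∑' e : ↥(T.edgeSet \ {s(a, b)}), edgeLen (e : Sym2 M)) ≠ ⊤ := by
        intro h
        rw [hsplit2, h, add_top] at hfin
        exact lt_irrefl _ hfin
      have hstrict : graphLen T' < graphLen T := by
        rw [hsplit1, hsplit2]
        exact ENNReal.add_lt_add_right hLfin hxy
      exact absurd (hmin T' hT'tree) (not_le.mpr hstrict)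
    · simp only [setDist]
      exact le_trans (iInf₂_le a (Reachable.refl _)) (iInf₂_le b (Reachable.refl _))
  · intro hex
    refine ⟨hT, hfin, fun T' hT' => ?_⟩
    classical
    have hbound : ∀ F : Finset T.edgeSet, ∑ f ∈ F, edgeLen (f : Sym2 M) ≤ graphLen T' := by
      intro F
      set S : Finset (Sym2 M) := F.image Subtype.val with hSdef
      have hsum : ∑ f ∈ F, edgeLen (f : Sym2 M) = ∑ g ∈ S, edgeLen g :=
        (Finset.sum_image (fun p _ q _ h => Subtype.ext h)).symm
      have hS : ∀ f ∈ S, f ∈ T.edgeSet := by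
        intro f hf
        obtain ⟨g, -, rfl⟩ := Finset.mem_image.mp hf
        exact g.2
      obtain ⟨φ, hinj, hφ⟩ := key T hT.IsAcyclic S.card S rfl hS T' hT'.isConnected
      have hle : ∀ f ∈ S, edgeLen f ≤ edgeLen (φ f) := by
        intro f hf
        obtain ⟨a, b, rfl⟩ : ∃ a b, f = s(a, b) := Sym2.ind (fun a b => ⟨a, b, rfl⟩) f
        have hadj : T.Adj a b := hS _ hf
        obtain ⟨x, y, hfxy⟩ : ∃ x y, φ s(a, b) = s(x, y) :=
          Sym2.ind (fun x y => ⟨x, y, rfl⟩) (φ s(a, b))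
        have hcr : ¬(T.deleteEdges {s(a, b)}).Reachable x y := (hφ _ hf).2 x y hfxy
        have hrx := reach_or_reach hT.isConnected.preconnected hadj x
        have hry := reach_or_reach hT.isConnected.preconnected hadj y
        rw [hfxy, edgeLen_mk, edgeLen_mk]
        have hexact := hex a b hadj
        simp only [ExactEdge, setDist] at hexact
        rw [hexact]
        rcases hrx with hrx | hrx <;> rcases hry with hry | hry
        · exact absurd (hrx.symm.trans hry) hcr
        · exact le_trans (iInf₂_le x hrx) (iInf₂_le y hry)
        · exact le_trans (le_trans (iInf₂_le y hry) (iInf₂_le x hrx)) (edist_comm y x).le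
        · exact absurd (hrx.symm.trans hry) hcr
      have himg : ∀ g ∈ S.image φ, g ∈ T'.edgeSet := by
        intro g hg
        obtain ⟨f, hf, rfl⟩ := Finset.mem_image.mp hg
        exact (hφ f hf).1
      calc ∑ f ∈ F, edgeLen (f : Sym2 M) = ∑ g ∈ S, edgeLen g := hsum
        _ ≤ ∑ g ∈ S, edgeLen (φ g) := Finset.sum_le_sum hle
        _ = ∑ g ∈ S.image φ, edgeLen g :=
            (Finset.sum_image (fun q hq r hr h =>
              hinj (Finset.mem_coe.mpr hq) (Finset.mem_coe.mpr hr) h)).symm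
        _ = ∑ g ∈ S.image φ, Set.indicator T'.edgeSet edgeLen g :=
            Finset.sum_congr rfl (fun g hg => (Set.indicator_of_mem (himg g hg) _).symm)
        _ ≤ ∑' g : Sym2 M, Set.indicator T'.edgeSet edgeLen g := ENNReal.sum_le_tsum _
        _ = graphLen T' := by rw [graphLen_def]; exact (tsum_subtype _ _).symm
    rw [graphLen_def, ENNReal.tsum_eq_iSup_sum]
    exact iSup_le hbound

end MSTPaper
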